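/- Let E be a Banach lattice admitting a normalized positive weak*-null sequence (x*ₙ) in E*₊, and F a Banach lattice containing a positive sequence (yₙ) equivalent to the unit vector basis of c₀. Then the map Φ : ℓ∞ → L(E,F) defined by Φ(ξ)(x) = Σₙ ξₙ x*ₙ(x) yₙ is a well-defined isomorphic embedding of ℓ∞ into L(E,F), mapping positive ξ to positive operators. -/

import Mathlib

open Filter Topology

noncomputable section

/-- A continuous linear map between Banach lattices is *positive* if it maps the
positive cone into the positive cone. -/
def IsPositiveOp {E F : Type*} [NormedAddCommGroup E] [Lattice E] [HasSolidNorm E] [IsOrderedAddMonoid E] [NormedSpace ℝ E]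
    [NormedAddCommGroup F] [Lattice F] [HasSolidNorm F] [IsOrderedAddMonoid F] [NormedSpace ℝ F] (T : E →L[ℝ] F) : Prop :=
  ∀ x : E, 0 ≤ x → 0 ≤ T x

/-- `T` is a regular operator: a difference of two positive operators. -/
def IsRegularOp {E F : Type*} [NormedAddCommGroup E] [Lattice E] [HasSolidNorm E] [IsOrderedAddMonoid E] [NormedSpace ℝ E]
    [NormedAddCommGroup F] [Lattice F] [HasSolidNorm F] [IsOrderedAddMonoid F] [NormedSpace ℝ F] (T : E →L[ℝ] F) : Prop :=
  ∃ S₁ S₂ : E →L[ℝ] F, IsPositiveOp S₁ ∧ IsPositiveOp S₂ ∧ T = S₁ - S₂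

/-- `T` belongs to `K^r(E,F)`: a difference of two positive compact operators. -/
def IsCompactRegOp {E F : Type*} [NormedAddCommGroup E] [Lattice E] [HasSolidNorm E] [IsOrderedAddMonoid E] [NormedSpace ℝ E]
    [NormedAddCommGroup F] [Lattice F] [HasSolidNorm F] [IsOrderedAddMonoid F] [NormedSpace ℝ F] (T : E →L[ℝ] F) : Prop :=
  ∃ S₁ S₂ : E →L[ℝ] F, IsPositiveOp S₁ ∧ IsPositiveOp S₂ ∧
    IsCompactOperator ⇑S₁ ∧ IsCompactOperator ⇑S₂ ∧ T = S₁ - S₂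

/-- The regular norm `‖T‖_r = inf {‖S‖ : S ≥ ±T}`. -/
def regNorm {E F : Type*} [NormedAddCommGroup E] [Lattice E] [HasSolidNorm E] [IsOrderedAddMonoid E] [NormedSpace ℝ E]
    [NormedAddCommGroup F] [Lattice F] [HasSolidNorm F] [IsOrderedAddMonoid F] [NormedSpace ℝ F] (T : E →L[ℝ] F) : ℝ :=
  sInf {c : ℝ | ∃ S : E →L[ℝ] F, IsPositiveOp (S - T) ∧ IsPositiveOp (S + T) ∧ ‖S‖ = c}

/-- The k-norm `‖T‖_k = inf {‖S‖ : S ∈ K^r(E,F), S ≥ ±T}`. -/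
def kNorm {E F : Type*} [NormedAddCommGroup E] [Lattice E] [HasSolidNorm E] [IsOrderedAddMonoid E] [NormedSpace ℝ E]
    [NormedAddCommGroup F] [Lattice F] [HasSolidNorm F] [IsOrderedAddMonoid F] [NormedSpace ℝ F] (T : E →L[ℝ] F) : ℝ :=
  sInf {c : ℝ | ∃ S : E →L[ℝ] F, IsCompactRegOp S ∧
    IsPositiveOp (S - T) ∧ IsPositiveOp (S + T) ∧ ‖S‖ = c}

/-- The order on operators: `T ≤ S` iff `T x ≤ S x` for all `x ≥ 0`. -/
def OpLE {E F : Type*} [NormedAddCommGroup E] [Lattice E] [HasSolidNorm E] [IsOrderedAddMonoid E] [NormedSpace ℝ E]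
    [NormedAddCommGroup F] [Lattice F] [HasSolidNorm F] [IsOrderedAddMonoid F] [NormedSpace ℝ F] (T S : E →L[ℝ] F) : Prop :=
  ∀ x : E, 0 ≤ x → T x ≤ S x

/-- A Banach lattice is a KB-space if every norm-bounded increasing sequence of
positive elements converges in norm. -/
def IsKBSpace (F : Type*) [NormedAddCommGroup F] [Lattice F] [HasSolidNorm F] [IsOrderedAddMonoid F] : Prop :=
  ∀ f : ℕ → F, Monotone f → (∀ n, 0 ≤ f n) → (∃ C, ∀ n, ‖f n‖ ≤ C) →
    ∃ y, Tendsto f atTop (𝓝 y)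

/-- An atom of a Banach lattice. -/
def IsLatticeAtom {E : Type*} [NormedAddCommGroup E] [Lattice E] [HasSolidNorm E] [IsOrderedAddMonoid E] [NormedSpace ℝ E] (e : E) : Prop :=
  0 < e ∧ ∀ x : E, 0 ≤ x → x ≤ e → ∃ t : ℝ, x = t • e

/-- An atomic Banach lattice: every nonzero positive element dominates an atom. -/
def IsAtomicLattice (E : Type*) [NormedAddCommGroup E] [Lattice E] [HasSolidNorm E] [IsOrderedAddMonoid E] [NormedSpace ℝ E] : Prop :=
  ∀ x : E, 0 < x → ∃ a : E, IsLatticeAtom a ∧ a ≤ x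

/-- The norm is order continuous: every downward directed net decreasing to `0`
converges to `0` in norm. -/
def HasOrderContinuousNorm (E : Type*) [NormedAddCommGroup E] [Lattice E] [HasSolidNorm E] [IsOrderedAddMonoid E] : Prop :=
  ∀ (ι : Type) [Preorder ι] [IsDirected ι (· ≤ ·)] (x : ι → E),
    Antitone x → IsGLB (Set.range x) 0 → Tendsto (fun i => ‖x i‖) atTop (𝓝 0)

/-- In a normed lattice group which is a normed `ℝ`-space, nonnegative scalar multiples of
nonnegative elements are nonnegative. -/
lemma aux_smul_nonneg {F : Type*} [NormedAddCommGroup F] [Lattice F] [HasSolidNorm F] [IsOrderedAddMonoid F] [NormedSpace ℝ F]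
    {c : ℝ} (hc : 0 ≤ c) {v : F} (hv : 0 ≤ v) : 0 ≤ c • v := by
  have key : ∀ (k m : ℕ), 0 ≤ ((m : ℝ) / 2 ^ k) • v := by
    intro k
    induction k with
    | zero =>
      intro m
      have : ((m : ℝ) / 2 ^ 0) • v = m • v := by
        rw [pow_zero, div_one, ← Nat.cast_smul_eq_nsmul ℝ]
      rw [this]
      exact nsmul_nonneg hv m
    | succ k ih =>
      intro m
      refine nsmul_two_semiclosed ?_
      have h2 : (2 : ℕ) • (((m : ℝ) / 2 ^ (k + 1)) • v) = ((m : ℝ) / 2 ^ k) • v := by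
        rw [← Nat.cast_smul_eq_nsmul ℝ, smul_smul]
        congr 1
        push_cast
        field_simp
        ring
      rw [h2]
      exact ih m
  set s : ℕ → ℝ := fun k => (⌊c * 2 ^ k⌋₊ : ℝ) / 2 ^ k with hs_def
  have h2pos : ∀ k : ℕ, (0 : ℝ) < 2 ^ k := fun k => by positivity
  have hs_le : ∀ k, s k ≤ c := by
    intro k
    rw [hs_def]
    rw [div_le_iff₀ (h2pos k)]
    exact Nat.floor_le (by positivity)
  have hs_ge : ∀ k, c - (1 / 2) ^ k ≤ s k := by
    intro k
    have := Nat.lt_floor_add_one (c * 2 ^ k)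
    rw [hs_def]
    rw [le_div_iff₀ (h2pos k)]
    have h12 : ((1 : ℝ) / 2) ^ k * 2 ^ k = 1 := by
      rw [div_pow, one_pow, one_div_mul_cancel (h2pos k).ne']
    nlinarith
  have hlim : Tendsto s atTop (𝓝 c) := by
    have h1 : Tendsto (fun k : ℕ => c - (1 / 2 : ℝ) ^ k) atTop (𝓝 c) := by
      have := tendsto_pow_atTop_nhds_zero_of_lt_one (by norm_num : (0:ℝ) ≤ 1/2)
        (by norm_num : (1/2 : ℝ) < 1)
      simpa using tendsto_const_nhds.sub this
    exact tendsto_of_tendsto_of_tendsto_of_le_of_le h1 tendsto_const_nhds hs_ge hs_le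
  have hlim2 : Tendsto (fun k => s k • v) atTop (𝓝 (c • v)) := hlim.smul_const v
  exact ge_of_tendsto' hlim2 fun k => key k _

/-- given a normalized positive weak*-null sequence `(x*ₙ)` in `E*₊` and a
positive sequence `(yₙ)` in `F₊` equivalent to the unit vector basis of `c₀`, the map
`Φ(ξ)(x) = Σₙ ξₙ x*ₙ(x) yₙ` is a well-defined isomorphic embedding of `ℓ∞` into `L(E,F)`
mapping positive `ξ` to positive operators. -/
theorem stmt13 {E F : Type*}
    [NormedAddCommGroup E] [Lattice E] [HasSolidNorm E] [IsOrderedAddMonoid E] [NormedSpace ℝ E] [CompleteSpace E]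
    [NormedAddCommGroup F] [Lattice F] [HasSolidNorm F] [IsOrderedAddMonoid F] [NormedSpace ℝ F] [CompleteSpace F]
    (f : ℕ → (E →L[ℝ] ℝ)) (hfnorm : ∀ n, ‖f n‖ = 1)
    (hfpos : ∀ n, IsPositiveOp (f n))
    (hfwstar : ∀ x : E, Tendsto (fun n => f n x) atTop (𝓝 0))
    (y : ℕ → F) (hypos : ∀ n, 0 ≤ y n)
    (a b : ℝ) (ha : 0 < a) (hb : 0 < b)
    (hc0 : ∀ (s : Finset ℕ) (ξ : ℕ → ℝ),
      a * ((s.sup fun i => ‖ξ i‖₊ : NNReal) : ℝ) ≤ ‖∑ i ∈ s, ξ i • y i‖ ∧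
      ‖∑ i ∈ s, ξ i • y i‖ ≤ b * ((s.sup fun i => ‖ξ i‖₊ : NNReal) : ℝ)) :
    ∃ Φ : lp (fun _ : ℕ => ℝ) ⊤ →ₗ[ℝ] (E →L[ℝ] F),
      (∀ (ξ : lp (fun _ : ℕ => ℝ) ⊤) (x : E),
        HasSum (fun n => (ξ n * f n x) • y n) (Φ ξ x)) ∧
      (∀ ξ : lp (fun _ : ℕ => ℝ) ⊤, (∀ n, 0 ≤ ξ n) → IsPositiveOp (Φ ξ)) ∧
      ∃ A B : ℝ, 0 < A ∧ 0 < B ∧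
        ∀ ξ, A * ‖ξ‖ ≤ ‖Φ ξ‖ ∧ ‖Φ ξ‖ ≤ B * ‖ξ‖ := by
  classical
  -- basic upper bound on finite partial sums
  have bound : ∀ (s : Finset ℕ) (c : ℕ → ℝ) (C : ℝ), 0 ≤ C → (∀ i ∈ s, ‖c i‖ ≤ C) →
      ‖∑ i ∈ s, c i • y i‖ ≤ b * C := by
    intro s c C hC h
    refine (hc0 s c).2.trans ?_
    have hsup : (s.sup fun i => ‖c i‖₊) ≤ C.toNNReal :=
      Finset.sup_le fun i hi => (Real.le_toNNReal_iff_coe_le hC).2 (h i hi)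
    have : ((s.sup fun i => ‖c i‖₊ : NNReal) : ℝ) ≤ C := by
      calc ((s.sup fun i => ‖c i‖₊ : NNReal) : ℝ) ≤ (C.toNNReal : ℝ) := by
            exact_mod_cast hsup
        _ = C := Real.coe_toNNReal _ hC
    nlinarith [hb.le]
  -- lower bound for limits of sums
  have lower : ∀ (c : ℕ → ℝ) (L : F), HasSum (fun n => c n • y n) L →
      ∀ n, a * ‖c n‖ ≤ ‖L‖ := by
    intro c L hL n
    have h1 : Tendsto (fun s : Finset ℕ => ‖∑ i ∈ s, c i • y i‖) atTop (𝓝 ‖L‖) :=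
      (continuous_norm.tendsto L).comp hL
    refine ge_of_tendsto h1 ?_
    refine Filter.eventually_atTop.2 ⟨{n}, fun s hs => ?_⟩
    have hmem : n ∈ s := hs (Finset.mem_singleton_self n)
    calc a * ‖c n‖ = a * ((‖c n‖₊ : NNReal) : ℝ) := by simp
      _ ≤ a * ((s.sup fun i => ‖c i‖₊ : NNReal) : ℝ) := by
          have : (‖c n‖₊ : NNReal) ≤ s.sup fun i => ‖c i‖₊ :=
            Finset.le_sup (f := fun i => ‖c i‖₊) hmem
          have h2 : ((‖c n‖₊ : NNReal) : ℝ) ≤ ((s.sup fun i => ‖c i‖₊ : NNReal) : ℝ) := by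
            exact_mod_cast this
          nlinarith
      _ ≤ ‖∑ i ∈ s, c i • y i‖ := (hc0 s c).1
  -- summability
  have hsumm : ∀ (ξ : lp (fun _ : ℕ => ℝ) ⊤) (x : E),
      Summable (fun n => (ξ n * f n x) • y n) := by
    intro ξ x
    rw [summable_iff_vanishing_norm]
    intro ε hε
    have hbpos : 0 < b * (‖ξ‖ + 1) := by nlinarith [norm_nonneg ξ]
    set δ : ℝ := ε / (2 * (b * (‖ξ‖ + 1))) with hδ
    have hδpos : 0 < δ := div_pos hε (by linarith)
    obtain ⟨N, hN⟩ := (Metric.tendsto_atTop.1 (hfwstar x)) δ hδpos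
    refine ⟨Finset.range N, fun t ht => ?_⟩
    have hb1 : ∀ i ∈ t, ‖ξ i * f i x‖ ≤ (‖ξ‖ + 1) * δ := by
      intro i hi
      have hiN : N ≤ i := by
        by_contra h
        exact (Finset.disjoint_left.1 ht hi) (Finset.mem_range.2 (lt_of_not_ge h))
      have h2 : ‖f i x‖ ≤ δ := by
        have := hN i hiN
        rw [Real.dist_eq, sub_zero] at this
        exact (Real.norm_eq_abs _ ▸ this.le)
      have h3 : ‖ξ i‖ ≤ ‖ξ‖ + 1 := by
        have := lp.norm_apply_le_norm ENNReal.top_ne_zero ξ i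
        linarith
      calc ‖ξ i * f i x‖ = ‖ξ i‖ * ‖f i x‖ := norm_mul _ _
        _ ≤ (‖ξ‖ + 1) * δ := by
            refine mul_le_mul h3 h2 (norm_nonneg _) ?_
            nlinarith [norm_nonneg ξ]
    have hfin := bound t (fun i => ξ i * f i x) ((‖ξ‖ + 1) * δ)
      (by nlinarith [norm_nonneg ξ, hδpos.le]) hb1
    refine lt_of_le_of_lt hfin ?_
    rw [hδ, ← mul_assoc, mul_comm, div_mul_eq_mul_div,
      div_lt_iff₀ (by linarith : (0:ℝ) < 2 * (b * (‖ξ‖ + 1)))]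
    nlinarith
  -- norm bound on the total sum
  have normbound : ∀ (ξ : lp (fun _ : ℕ => ℝ) ⊤) (x : E),
      ‖∑' n, (ξ n * f n x) • y n‖ ≤ b * ‖ξ‖ * ‖x‖ := by
    intro ξ x
    have hS := (hsumm ξ x).hasSum
    have h1 : Tendsto (fun s : Finset ℕ => ‖∑ i ∈ s, (ξ i * f i x) • y i‖) atTop
        (𝓝 ‖∑' n, (ξ n * f n x) • y n‖) := (continuous_norm.tendsto _).comp hS
    refine le_of_tendsto h1 (Filter.Eventually.of_forall fun s => ?_)
    have := bound s (fun i => ξ i * f i x) (‖ξ‖ * ‖x‖)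
      (mul_nonneg (norm_nonneg _) (norm_nonneg _)) ?_
    · linarith [this, le_of_eq (mul_assoc b ‖ξ‖ ‖x‖)]
    · intro i _
      calc ‖ξ i * f i x‖ = ‖ξ i‖ * ‖f i x‖ := norm_mul _ _
        _ ≤ ‖ξ‖ * ‖x‖ := by
            refine mul_le_mul (lp.norm_apply_le_norm ENNReal.top_ne_zero ξ i) ?_
              (norm_nonneg _) (norm_nonneg _)
            calc ‖f i x‖ ≤ ‖f i‖ * ‖x‖ := (f i).le_opNorm x
              _ = ‖x‖ := by rw [hfnorm i, one_mul]
  -- the operator for fixed ξ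
  have hTadd : ∀ (ξ : lp (fun _ : ℕ => ℝ) ⊤) (x x' : E),
      HasSum (fun n => (ξ n * f n (x + x')) • y n)
        ((∑' n, (ξ n * f n x) • y n) + ∑' n, (ξ n * f n x') • y n) := by
    intro ξ x x'
    have := (hsumm ξ x).hasSum.add (hsumm ξ x').hasSum
    convert this using 2 with n
    rw [map_add, mul_add, add_smul]
  let T : (lp (fun _ : ℕ => ℝ) ⊤) → (E →L[ℝ] F) := fun ξ =>
    LinearMap.mkContinuous
      { toFun := fun x => ∑' n, (ξ n * f n x) • y n
        map_add' := fun x x' => (hTadd ξ x x').tsum_eq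
        map_smul' := fun c x => by
          have : HasSum (fun n => (ξ n * f n (c • x)) • y n)
              (c • ∑' n, (ξ n * f n x) • y n) := by
            have := (hsumm ξ x).hasSum.const_smul c
            convert this using 2 with n
            rw [map_smul, smul_eq_mul, smul_smul]
            ring_nf
          simpa using this.tsum_eq }
      (b * ‖ξ‖) (fun x => by
        show ‖∑' n, (ξ n * f n x) • y n‖ ≤ b * ‖ξ‖ * ‖x‖
        exact normbound ξ x)
  have hT : ∀ (ξ : lp (fun _ : ℕ => ℝ) ⊤) (x : E),
      HasSum (fun n => (ξ n * f n x) • y n) (T ξ x) := fun ξ x => (hsumm ξ x).hasSum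
  -- the linear map Φ
  refine ⟨{ toFun := T
            map_add' := fun ξ ζ => by
              ext x
              have h1 : HasSum (fun n => (((ξ + ζ) : lp (fun _ : ℕ => ℝ) ⊤) n * f n x) • y n)
                  (T ξ x + T ζ x) := by
                have := (hT ξ x).add (hT ζ x)
                convert this using 2 with n
                have : ((ξ + ζ) : lp (fun _ : ℕ => ℝ) ⊤) n = ξ n + ζ n := by
                  simp [lp.coeFn_add]
                rw [this, add_mul, add_smul]
              exact h1.tsum_eq
            map_smul' := fun c ξ => by
              ext x
              have h1 : HasSum (fun n => (((c • ξ) : lp (fun _ : ℕ => ℝ) ⊤) n * f n x) • y n)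
                  (c • T ξ x) := by
                have := (hT ξ x).const_smul c
                convert this using 2 with n
                have : ((c • ξ) : lp (fun _ : ℕ => ℝ) ⊤) n = c * ξ n := by
                  simp [lp.coeFn_smul]
                rw [this, smul_smul]
                ring_nf
              exact h1.tsum_eq },
        hT, ?_, a, b, ha, hb, fun ξ => ⟨?_, ?_⟩⟩
  · -- positivity
    intro ξ hξ x hx
    exact hasSum_le
      (fun n => aux_smul_nonneg (mul_nonneg (hξ n) (hfpos n x hx)) (hypos n))
      hasSum_zero (hT ξ x)
  · -- lower norm bound
    have key : ∀ n, a * ‖ξ n‖ ≤ ‖T ξ‖ := by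
      intro n
      refine le_of_forall_lt fun c hc => ?_
      rcases lt_or_ge c 0 with h | h
      · exact h.trans_le (norm_nonneg _)
      · have hξn : 0 < ‖ξ n‖ := by
          by_contra h'
          have : ‖ξ n‖ = 0 := le_antisymm (not_lt.1 h') (norm_nonneg _)
          rw [this, mul_zero] at hc
          exact absurd hc (not_lt.2 h)
        have hd : 0 < a * ‖ξ n‖ := mul_pos ha hξn
        have hr : c / (a * ‖ξ n‖) < 1 := (div_lt_one hd).2 hc
        have hr' : c / (a * ‖ξ n‖) < ‖f n‖ := by rw [hfnorm n]; exact hr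
        obtain ⟨x, hx1, hx2⟩ := (f n).exists_lt_apply_of_lt_opNorm hr'
        have h3 : c < a * ‖ξ n * f n x‖ := by
          have := (div_lt_iff₀ hd).1 hx2
          rw [norm_mul]
          nlinarith
        have h4 : a * ‖ξ n * f n x‖ ≤ ‖T ξ x‖ :=
          lower (fun k => ξ k * f k x) (T ξ x) (hT ξ x) n
        have h5 : ‖T ξ x‖ ≤ ‖T ξ‖ := by
          calc ‖T ξ x‖ ≤ ‖T ξ‖ * ‖x‖ := (T ξ).le_opNorm x
            _ ≤ ‖T ξ‖ * 1 := by
                exact mul_le_mul_of_nonneg_left hx1.le (norm_nonneg _)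
            _ = ‖T ξ‖ := mul_one _
        linarith
    have hsup : (⨆ n, ‖ξ n‖) ≤ ‖T ξ‖ / a :=
      ciSup_le fun n => (le_div_iff₀' ha).2 (key n)
    have : ‖ξ‖ ≤ ‖T ξ‖ / a := by rw [lp.norm_eq_ciSup]; exact hsup
    calc a * ‖ξ‖ ≤ a * (‖T ξ‖ / a) := by nlinarith
      _ = ‖T ξ‖ := by rw [mul_comm, div_mul_cancel₀ _ ha.ne']
  · -- upper norm bound
    refine ContinuousLinearMap.opNorm_le_bound _ (mul_nonneg hb.le (norm_nonneg _)) fun x => ?_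
    show ‖∑' n, (ξ n * f n x) • y n‖ ≤ b * ‖ξ‖ * ‖x‖
    exact normbound ξ x
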